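/- Let G be a finite simple graph and let G' be a graph obtained from G by adding k edges (i.e., G and G' have the same vertex set, G is a subgraph of G', and the edge set of G' has exactly k more edges than that of G). Then γ_gr(G) - k ≤ γ_gr(G') ≤ γ_gr(G) + k. -/

import Mathlib

/-- The closed neighborhood `N[v] = {v} ∪ N(v)` of a vertex. -/
def closedNbhd {V : Type*} (G : SimpleGraph V) (v : V) : Set V :=
  insert v (G.neighborSet v)

/-- A sequence (list) of pairwise distinct vertices is legal if each vertex
footprints some vertex not dominated by the previous ones. -/
def IsLegalSeq {V : Type*} (G : SimpleGraph V) (l : List V) : Prop :=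
  l.Nodup ∧ ∀ i : Fin l.length, ∃ u,
    u ∈ closedNbhd G (l.get i) ∧
    ∀ j : Fin l.length, (j : ℕ) < (i : ℕ) → u ∉ closedNbhd G (l.get j)

/-- A legal dominating sequence. -/
def IsDomSeq {V : Type*} (G : SimpleGraph V) (l : List V) : Prop :=
  IsLegalSeq G l ∧ ∀ u : V, ∃ v ∈ l, u ∈ closedNbhd G v

/-- The Grundy domination number: the maximum length of a legal dominating sequence. -/
noncomputable def grundyDomNum {V : Type*} (G : SimpleGraph V) : ℕ :=
  sSup {k : ℕ | ∃ l : List V, IsDomSeq G l ∧ l.length = k}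

namespace GrundyAux

variable {V : Type*}

lemma self_mem_closedNbhd (G : SimpleGraph V) (v : V) : v ∈ closedNbhd G v :=
  Set.mem_insert _ _

lemma mem_closedNbhd_iff {G : SimpleGraph V} {v u : V} :
    u ∈ closedNbhd G v ↔ u = v ∨ G.Adj v u := by
  simp [closedNbhd, SimpleGraph.mem_neighborSet]

lemma legal_of_sublist {G : SimpleGraph V} {l l' : List V} (hsub : List.Sublist l' l)
    (hnd : l.Nodup) (w : Fin l.length → V)
    (hw : ∀ i : Fin l.length, l.get i ∈ l' →
      w i ∈ closedNbhd G (l.get i) ∧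
      ∀ j : Fin l.length, (j : ℕ) < (i : ℕ) → w i ∉ closedNbhd G (l.get j)) :
    IsLegalSeq G l' := by
  obtain ⟨f, hf⟩ := List.sublist_iff_exists_fin_orderEmbedding_get_eq.mp hsub
  refine ⟨hsub.nodup hnd, fun i => ?_⟩
  have hmem : l.get (f i) ∈ l' := by rw [← hf i]; exact l'.get_mem i
  obtain ⟨h1, h2⟩ := hw (f i) hmem
  refine ⟨w (f i), by rw [hf i]; exact h1, fun j hj => ?_⟩
  rw [hf j]
  exact h2 (f j) (f.strictMono (show j < i from hj))


lemma drop_one {H : SimpleGraph V} {l : List V} (hnd : l.Nodup) (w : Fin l.length → V)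
    (good : Fin l.length → Prop)
    (hgood : ∀ i, good i → w i ∈ closedNbhd H (l.get i) ∧
      ∀ j : Fin l.length, (j : ℕ) < (i : ℕ) → w i ∉ closedNbhd H (l.get j))
    (huniq : ∀ i₁ i₂, ¬ good i₁ → ¬ good i₂ → i₁ = i₂) :
    ∃ l', IsLegalSeq H l' ∧ l.length ≤ l'.length + 1 := by
  classical
  by_cases hall : ∀ i, good i
  · exact ⟨l, ⟨hnd, fun i => ⟨w i, hgood i (hall i)⟩⟩, by omega⟩
  · push_neg at hall
    obtain ⟨i₀, hi₀⟩ := hall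
    refine ⟨l.erase (l.get i₀), ?_, ?_⟩
    · apply legal_of_sublist l.erase_sublist hnd w
      intro i hmem
      have hne : l.get i ≠ l.get i₀ := (hnd.mem_erase_iff.mp hmem).1
      have hg : good i := by
        by_contra hg
        exact hne (congrArg l.get (huniq i i₀ hg hi₀))
      exact hgood i hg
    · have hm : l.get i₀ ∈ l := l.get_mem _
      have := List.length_erase_add_one hm
      omega


lemma legal_append [Fintype V] {G : SimpleGraph V} {l : List V} (hl : IsLegalSeq G l)
    {u : V} (hu : ∀ v ∈ l, u ∉ closedNbhd G v) : IsLegalSeq G (l ++ [u]) := by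
  have hunl : u ∉ l := fun h => hu u h (self_mem_closedNbhd G u)
  constructor
  · simp [List.nodup_append, hl.1, hunl]
    intro a ha h
    subst h
    exact hunl ha
  · intro i
    have hlen : (l ++ [u]).length = l.length + 1 := by simp
    by_cases hi : (i : ℕ) < l.length
    · obtain ⟨v, hv1, hv2⟩ := hl.2 ⟨i, hi⟩
      have hget : (l ++ [u]).get i = l.get ⟨i, hi⟩ := by
        simp [List.getElem_append, hi]
      refine ⟨v, by rw [hget]; exact hv1, fun j hj => ?_⟩
      have hjl : (j : ℕ) < l.length := lt_trans hj hi
      have hgetj : (l ++ [u]).get j = l.get ⟨j, hjl⟩ := by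
        simp [List.getElem_append, hjl]
      rw [hgetj]
      exact hv2 ⟨j, hjl⟩ hj
    · have hieq : (i : ℕ) = l.length := by
        have h2 : (i : ℕ) < l.length + 1 := by simpa using i.isLt
        omega
      have hget : (l ++ [u]).get i = u := by
        simp [List.getElem_append, hieq]
      refine ⟨u, by rw [hget]; exact self_mem_closedNbhd G u, fun j hj => ?_⟩
      have hjl : (j : ℕ) < l.length := by omega
      have hgetj : (l ++ [u]).get j = l.get ⟨j, hjl⟩ := by
        simp [List.getElem_append, hjl]
      rw [hgetj]
      exact hu _ (l.get_mem _)

lemma exists_domSeq_extending [Fintype V] (G : SimpleGraph V) :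
    ∀ n : ℕ, ∀ l : List V, IsLegalSeq G l → Fintype.card V - l.length ≤ n →
    ∃ l', IsDomSeq G l' ∧ l.length ≤ l'.length := by
  intro n
  induction n with
  | zero =>
    intro l hl hn
    classical
    refine ⟨l, ⟨hl, fun u => ?_⟩, le_refl _⟩
    have hlen : l.length = Fintype.card V := le_antisymm hl.1.length_le_card (by omega)
    have : ∀ v : V, v ∈ l := by
      intro v
      have h1 : l.toFinset.card = Fintype.card V := by
        rw [List.toFinset_card_of_nodup hl.1, hlen]
      have h2 : l.toFinset = Finset.univ := Finset.eq_univ_of_card _ h1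
      have : v ∈ l.toFinset := h2 ▸ Finset.mem_univ v
      simpa using this
    exact ⟨u, this u, self_mem_closedNbhd G u⟩
  | succ n ih =>
    intro l hl hn
    by_cases hdom : ∀ u : V, ∃ v ∈ l, u ∈ closedNbhd G v
    · exact ⟨l, ⟨hl, hdom⟩, le_refl _⟩
    · push_neg at hdom
      obtain ⟨u, hu⟩ := hdom
      have hu' : ∀ v ∈ l, u ∉ closedNbhd G v := fun v hv h => (hu v hv) h
      have hl' := legal_append hl hu'
      have hlen : (l ++ [u]).length = l.length + 1 := by simp
      obtain ⟨l', hd, hle⟩ := ih (l ++ [u]) hl' (by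
        have := hl'.1.length_le_card
        omega)
      exact ⟨l', hd, by omega⟩

lemma bddAbove_lengths [Fintype V] (G : SimpleGraph V) :
    BddAbove {k : ℕ | ∃ l : List V, IsDomSeq G l ∧ l.length = k} := by
  refine ⟨Fintype.card V, fun k hk => ?_⟩
  obtain ⟨l, hd, rfl⟩ := hk
  exact hd.1.1.length_le_card

lemma length_le_grundy [Fintype V] {G : SimpleGraph V} {l : List V} (h : IsLegalSeq G l) :
    l.length ≤ grundyDomNum G := by
  obtain ⟨l', hd, hlen⟩ := exists_domSeq_extending G (Fintype.card V) l h (Nat.sub_le _ _)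
  exact hlen.trans (le_csSup (bddAbove_lengths G) ⟨l', hd, rfl⟩)

lemma exists_max [Fintype V] (G : SimpleGraph V) :
    ∃ l : List V, IsDomSeq G l ∧ l.length = grundyDomNum G := by
  have hnil : IsLegalSeq G ([] : List V) := ⟨List.nodup_nil, fun i => i.elim0⟩
  obtain ⟨l, hd, -⟩ := exists_domSeq_extending G (Fintype.card V) [] hnil (Nat.sub_le _ _)
  have hne : {k : ℕ | ∃ l : List V, IsDomSeq G l ∧ l.length = k}.Nonempty := ⟨l.length, l, hd, rfl⟩
  exact Nat.sSup_mem hne (bddAbove_lengths G)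


section Step

variable {G G' : SimpleGraph V} {x y : V}

lemma subset_closedNbhd (hE : G'.edgeSet = insert s(x, y) G.edgeSet) (v : V) :
    closedNbhd G v ⊆ closedNbhd G' v := by
  intro u hu
  rcases mem_closedNbhd_iff.mp hu with h | h
  · exact mem_closedNbhd_iff.mpr (Or.inl h)
  · refine mem_closedNbhd_iff.mpr (Or.inr ?_)
    rw [← SimpleGraph.mem_edgeSet, hE]
    exact Set.mem_insert_iff.mpr (Or.inr h)

lemma mem_closedNbhd_cases (hE : G'.edgeSet = insert s(x, y) G.edgeSet) {v u : V}
    (h : u ∈ closedNbhd G' v) :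
    u ∈ closedNbhd G v ∨ (v = x ∧ u = y) ∨ (v = y ∧ u = x) := by
  rcases mem_closedNbhd_iff.mp h with h | h
  · exact Or.inl (mem_closedNbhd_iff.mpr (Or.inl h))
  · rw [← SimpleGraph.mem_edgeSet, hE, Set.mem_insert_iff] at h
    rcases h with h | h
    · rcases Sym2.eq_iff.mp h with ⟨h1, h2⟩ | ⟨h1, h2⟩
      · exact Or.inr (Or.inl ⟨h1, h2⟩)
      · exact Or.inr (Or.inr ⟨h1, h2⟩)
    · exact Or.inl (mem_closedNbhd_iff.mpr (Or.inr h))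

lemma stepA (hE : G'.edgeSet = insert s(x, y) G.edgeSet)
    {l : List V} (hl : IsLegalSeq G' l) :
    ∃ l', IsLegalSeq G l' ∧ l.length ≤ l'.length + 1 := by
  obtain ⟨hnd, hleg⟩ := hl
  choose w hw1 hw2 using hleg
  classical
  set good := fun i : Fin l.length => w i ∈ closedNbhd G (l.get i) with hgdef
  have hbad : ∀ i, ¬ good i →
      (l.get i = x ∧ w i = y) ∨ (l.get i = y ∧ w i = x) := by
    intro i hg
    rcases mem_closedNbhd_cases hE (hw1 i) with h | h | h
    · exact absurd h hg
    · exact Or.inl h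
    · exact Or.inr h
  have key : ∀ i₁ i₂ : Fin l.length, (i₁ : ℕ) < (i₂ : ℕ) → ¬ good i₁ → ¬ good i₂ → False := by
    intro i₁ i₂ hlt h1 h2
    have hne : i₁ ≠ i₂ := by
      intro h; rw [h] at hlt; omega
    rcases hbad i₁ h1 with ⟨hv1, hu1⟩ | ⟨hv1, hu1⟩ <;>
      rcases hbad i₂ h2 with ⟨hv2, hu2⟩ | ⟨hv2, hu2⟩
    · exact hne (List.Nodup.get_inj_iff hnd |>.mp (hv1.trans hv2.symm))
    · exact hw2 i₂ i₁ hlt (by rw [hu2, hv1]; exact self_mem_closedNbhd G' _)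
    · exact hw2 i₂ i₁ hlt (by rw [hu2, hv1]; exact self_mem_closedNbhd G' _)
    · exact hne (List.Nodup.get_inj_iff hnd |>.mp (hv1.trans hv2.symm))
  apply drop_one hnd w good
  · intro i hg
    exact ⟨hg, fun j hj hmem => hw2 i j hj (subset_closedNbhd hE _ hmem)⟩
  · intro i₁ i₂ h1 h2
    by_contra hne
    have : (i₁ : ℕ) ≠ (i₂ : ℕ) := fun h => hne (Fin.ext h)
    rcases lt_or_gt_of_ne this with h | h
    · exact key i₁ i₂ h h1 h2
    · exact key i₂ i₁ h h2 h1

lemma stepB (hE : G'.edgeSet = insert s(x, y) G.edgeSet)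
    {l : List V} (hl : IsLegalSeq G l) :
    ∃ l', IsLegalSeq G' l' ∧ l.length ≤ l'.length + 1 := by
  obtain ⟨hnd, hleg⟩ := hl
  choose w hw1 hw2 using hleg
  classical
  set good := fun i : Fin l.length =>
    ∀ j : Fin l.length, (j : ℕ) < (i : ℕ) → w i ∉ closedNbhd G' (l.get j) with hgdef
  have hbad : ∀ i, ¬ good i → ∃ j : Fin l.length, (j : ℕ) < (i : ℕ) ∧
      ((l.get j = x ∧ w i = y) ∨ (l.get j = y ∧ w i = x)) := by
    intro i hg
    simp only [hgdef] at hg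
    push_neg at hg
    obtain ⟨j, hj, hmem⟩ := hg
    refine ⟨j, hj, ?_⟩
    rcases mem_closedNbhd_cases hE hmem with h | h | h
    · exact absurd h (hw2 i j hj)
    · exact Or.inl h
    · exact Or.inr h
  have key : ∀ i₁ i₂ : Fin l.length, (i₁ : ℕ) < (i₂ : ℕ) → ¬ good i₁ → ¬ good i₂ → False := by
    intro i₁ i₂ hlt h1 h2
    obtain ⟨j₁, hj₁, c₁⟩ := hbad i₁ h1
    obtain ⟨j₂, hj₂, c₂⟩ := hbad i₂ h2
    rcases c₁ with ⟨hv1, hu1⟩ | ⟨hv1, hu1⟩ <;> rcases c₂ with ⟨hv2, hu2⟩ | ⟨hv2, hu2⟩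
    · -- w i₁ = y = w i₂
      apply hw2 i₂ i₁ hlt
      rw [hu2, ← hu1]
      exact hw1 i₁
    · -- w i₂ = x = l.get j₁, j₁ < i₂
      apply hw2 i₂ j₁ (by omega)
      rw [hu2, hv1]
      exact self_mem_closedNbhd G _
    · apply hw2 i₂ j₁ (by omega)
      rw [hu2, hv1]
      exact self_mem_closedNbhd G _
    · apply hw2 i₂ i₁ hlt
      rw [hu2, ← hu1]
      exact hw1 i₁
  apply drop_one hnd w good
  · intro i hg
    exact ⟨subset_closedNbhd hE _ (hw1 i), hg⟩
  · intro i₁ i₂ h1 h2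
    by_contra hne
    have : (i₁ : ℕ) ≠ (i₂ : ℕ) := fun h => hne (Fin.ext h)
    rcases lt_or_gt_of_ne this with h | h
    · exact key i₁ i₂ h h1 h2
    · exact key i₂ i₁ h h2 h1

lemma step_grundy [Fintype V] (hE : G'.edgeSet = insert s(x, y) G.edgeSet) :
    grundyDomNum G ≤ grundyDomNum G' + 1 ∧ grundyDomNum G' ≤ grundyDomNum G + 1 := by
  constructor
  · obtain ⟨l, hd, hlen⟩ := exists_max G
    obtain ⟨l', hleg, hle⟩ := stepB hE hd.1
    calc grundyDomNum G = l.length := hlen.symm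
      _ ≤ l'.length + 1 := hle
      _ ≤ grundyDomNum G' + 1 := Nat.add_le_add_right (length_le_grundy hleg) 1
  · obtain ⟨l, hd, hlen⟩ := exists_max G'
    obtain ⟨l', hleg, hle⟩ := stepA hE hd.1
    calc grundyDomNum G' = l.length := hlen.symm
      _ ≤ l'.length + 1 := hle
      _ ≤ grundyDomNum G + 1 := Nat.add_le_add_right (length_le_grundy hleg) 1

end Step

end GrundyAux

open GrundyAux

theorem grundy_add_k_edges {V : Type*} [Fintype V] (G G' : SimpleGraph V) (k : ℕ)
    (hle : G ≤ G') (hcard : G'.edgeSet.ncard = G.edgeSet.ncard + k) :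
    grundyDomNum G - k ≤ grundyDomNum G' ∧ grundyDomNum G' ≤ grundyDomNum G + k := by
  have hfinSym : Finite (Sym2 V) := by infer_instance
  induction k generalizing G' with
  | zero =>
    have hsub : G.edgeSet ⊆ G'.edgeSet := SimpleGraph.edgeSet_subset_edgeSet.2 hle
    have hfin : G'.edgeSet.Finite := Set.toFinite _
    have heq : G.edgeSet = G'.edgeSet :=
      Set.eq_of_subset_of_ncard_le hsub (by omega) hfin
    have : G = G' := SimpleGraph.edgeSet_inj.mp heq
    subst this
    simp
  | succ k ih =>
    have hsub : G.edgeSet ⊆ G'.edgeSet := SimpleGraph.edgeSet_subset_edgeSet.2 hle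
    have hfin : G'.edgeSet.Finite := Set.toFinite _
    have hdiff : (G'.edgeSet \ G.edgeSet).ncard = k + 1 := by
      rw [Set.ncard_diff hsub (hfin.subset hsub)]
      omega
    have hne : (G'.edgeSet \ G.edgeSet).Nonempty :=
      Set.nonempty_of_ncard_ne_zero (by omega)
    obtain ⟨e, he', heG⟩ := hne
    obtain ⟨xx, yy, rfl⟩ : ∃ xx yy, e = s(xx, yy) := by
      induction e using Sym2.ind with
      | _ a b => exact ⟨a, b, rfl⟩
    set G'' := G'.deleteEdges {s(xx, yy)} with hG''
    have hE'' : G''.edgeSet = G'.edgeSet \ {s(xx, yy)} :=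
      SimpleGraph.edgeSet_deleteEdges _
    have h1 : G ≤ G'' := by
      rw [← SimpleGraph.edgeSet_subset_edgeSet, hE'']
      exact Set.subset_diff_singleton hsub heG
    have hcard'' : G''.edgeSet.ncard = G.edgeSet.ncard + k := by
      rw [hE'', Set.ncard_diff_singleton_of_mem he']
      omega
    have hEins : G'.edgeSet = insert s(xx, yy) G''.edgeSet := by
      rw [hE'', Set.insert_diff_singleton, Set.insert_eq_self.2 he']
    obtain ⟨ih1, ih2⟩ := ih G'' h1 hcard''
    obtain ⟨s1, s2⟩ := step_grundy (G := G'') (G' := G') hEins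
    constructor <;> omega
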